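/- For an index code with side information errors (δ_c = 0), a matrix G ∈ F_q^{n×N} is a valid generator matrix if and only if zG ≠ 0 for all z ∈ I(q,G,δ_s), where I(q,G,δ_s) = ∪_{i∈[m]} { z ∈ F_q^n : wt(z_{X_i}) ≤ 2δ_s, z_{f(i)} ≠ 0 }. -/

import Mathlib

lemma ham_card {n : ℕ} {F : Type} [Zero F] [DecidableEq F] (s : Finset (Fin n)) (g : Fin n → F) :
    hammingNorm (fun j : {j // j ∈ s} => g j.1) = (s.filter (fun j => g j ≠ 0)).card := by
  unfold hammingNorm
  apply Finset.card_bij (fun (j : {j // j ∈ s}) _ => j.1)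
  · intro a ha
    simp only [Finset.mem_filter] at ha ⊢
    exact ⟨a.2, ha.2⟩
  · intro a _ b _ h
    exact Subtype.ext h
  · intro b hb
    simp only [Finset.mem_filter] at hb
    exact ⟨⟨b, hb.1⟩, by simp [hb.2], rfl⟩


/-- For an ICSIE (`δc = 0`), `G` is a valid generator matrix
(every receiver can always recover its wanted packet from `xG` and its
side information having at most `δs` symbol errors) iff `zG ≠ 0` for all
`z ∈ I(q, G, δs)`. -/
theorem stmt1 {F : Type} [Field F] [DecidableEq F]
    {n N m : ℕ} (δs : ℕ)
    (X : Fin m → Finset (Fin n)) (f : Fin m → Fin n)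
    (hf : ∀ i, f i ∉ X i)
    (G : Matrix (Fin n) (Fin N) F) :
    (∀ i : Fin m, ∃ D : (Fin N → F) → ({j // j ∈ X i} → F) → F,
        ∀ x : Fin n → F, ∀ xhat : {j // j ∈ X i} → F,
          hammingNorm (fun j : {j // j ∈ X i} => xhat j - x j.1) ≤ δs →
          D (Matrix.vecMul x G) xhat = x (f i)) ↔
      (∀ z : Fin n → F,
        (∃ i : Fin m, z (f i) ≠ 0 ∧
          ((X i).filter (fun j => z j ≠ 0)).card ≤ 2 * δs) →
        Matrix.vecMul z G ≠ 0) := by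
  classical
  constructor
  · rintro h z ⟨i, hz1, hz2⟩ hzG
    obtain ⟨D, hD⟩ := h i
    set S := (X i).filter (fun j => z j ≠ 0) with hS
    obtain ⟨t, hts, htc⟩ := Finset.exists_subset_card_eq (s := S) (n := S.card - δs) (Nat.sub_le _ _)
    set e : Fin n → F := fun j => if j ∈ t then z j else 0 with he
    set xhat : {j // j ∈ X i} → F := fun j => e j.1 with hxhat
    -- bound for x = 0
    have hb0 : hammingNorm (fun j : {j // j ∈ X i} => xhat j - (0 : Fin n → F) j.1) ≤ δs := by
      have := ham_card (X i) (fun j => e j - 0)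
      simp only [Pi.zero_apply]
      rw [hxhat]
      refine le_trans (le_of_eq this) ?_
      have hsub : ((X i).filter (fun j => e j - 0 ≠ 0)) ⊆ t := by
        intro j hj
        simp only [Finset.mem_filter, he, sub_zero] at hj
        rcases hj with ⟨_, hj2⟩
        by_cases hjt : j ∈ t
        · exact hjt
        · simp [hjt] at hj2
      refine le_trans (Finset.card_le_card hsub) ?_
      rw [htc]; omega
    have hbz : hammingNorm (fun j : {j // j ∈ X i} => xhat j - z j.1) ≤ δs := by
      have := ham_card (X i) (fun j => e j - z j)
      rw [hxhat]
      refine le_trans (le_of_eq this) ?_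
      have hsub : ((X i).filter (fun j => e j - z j ≠ 0)) ⊆ S \ t := by
        intro j hj
        simp only [Finset.mem_filter, he] at hj
        rcases hj with ⟨hj1, hj2⟩
        by_cases hjt : j ∈ t
        · simp [hjt] at hj2
        · simp only [hjt, if_false, zero_sub, ne_eq, neg_eq_zero] at hj2
          exact Finset.mem_sdiff.mpr ⟨Finset.mem_filter.mpr ⟨hj1, hj2⟩, hjt⟩
      refine le_trans (Finset.card_le_card hsub) ?_
      rw [Finset.card_sdiff_of_subset hts, htc]
      have : S.card ≤ 2 * δs := hz2
      omega
    have h0 := hD 0 xhat hb0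
    have hz := hD z xhat hbz
    rw [Matrix.zero_vecMul] at h0
    rw [hzG] at hz
    rw [h0] at hz
    exact hz1 hz.symm
  · intro h i
    refine ⟨fun y xhat =>
      if hx : ∃ x' : Fin n → F, Matrix.vecMul x' G = y ∧
          hammingNorm (fun j : {j // j ∈ X i} => xhat j - x' j.1) ≤ δs
      then hx.choose (f i) else 0, ?_⟩
    intro x xhat hx
    have hex : ∃ x' : Fin n → F, Matrix.vecMul x' G = Matrix.vecMul x G ∧
        hammingNorm (fun j : {j // j ∈ X i} => xhat j - x' j.1) ≤ δs := ⟨x, rfl, hx⟩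
    simp only [dif_pos hex]
    set x' := hex.choose with hx'
    obtain ⟨hG', hham'⟩ := hex.choose_spec
    -- show x' (f i) = x (f i)
    set z : Fin n → F := fun j => x j - x' j with hz
    have hzG : Matrix.vecMul z G = 0 := by
      have : z = x - x' := rfl
      rw [this, Matrix.sub_vecMul, hG', sub_self]
    by_contra hne
    apply h z ?_ hzG
    refine ⟨i, ?_, ?_⟩
    · simp only [hz]
      intro hc
      exact hne (by rw [sub_eq_zero] at hc; rw [hc])
    · set e : Fin n → F := fun j => if hj : j ∈ X i then xhat ⟨j, hj⟩ else 0 with he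
      have hA : hammingNorm (fun j : {j // j ∈ X i} => xhat j - x j.1) =
          ((X i).filter (fun j => e j - x j ≠ 0)).card := by
        rw [← ham_card (X i) (fun j => e j - x j)]
        congr 1
        funext j
        simp [he, j.2]
      have hB : hammingNorm (fun j : {j // j ∈ X i} => xhat j - x' j.1) =
          ((X i).filter (fun j => e j - x' j ≠ 0)).card := by
        rw [← ham_card (X i) (fun j => e j - x' j)]
        congr 1
        funext j
        simp [he, j.2]
      have hsub : (X i).filter (fun j => z j ≠ 0) ⊆
          ((X i).filter (fun j => e j - x j ≠ 0)) ∪ ((X i).filter (fun j => e j - x' j ≠ 0)) := by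
        intro j hj
        simp only [Finset.mem_filter, Finset.mem_union, hz] at hj ⊢
        rcases hj with ⟨hj1, hj2⟩
        by_cases hp : e j - x j = 0
        · refine Or.inr ⟨hj1, fun hq => hj2 ?_⟩
          have h1 := sub_eq_zero.mp hp
          have h2 := sub_eq_zero.mp hq
          rw [sub_eq_zero, ← h1, h2]
        · exact Or.inl ⟨hj1, hp⟩
      refine le_trans (Finset.card_le_card hsub) ?_
      refine le_trans (Finset.card_union_le _ _) ?_
      rw [← hA, ← hB]
      have hham2 : hammingNorm (fun j : {j // j ∈ X i} => xhat j - x' j.1) ≤ δs := hham'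
      omega
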